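/- Let Ω ⊂ ℍ be open and let f ∈ C¹_H(Ω,ℝ²) be such that ∇_H f(x) is surjective for every x ∈ Ω. Then for every z ∈ ℝ², the level set S = f⁻¹(z) has the cone property: for every p ∈ S there exists a neighbourhood U of p such that for every α > 0 there exists r > 0 (depending on α and U) such that for every x ∈ U ∩ S one has S ∩ C_r(x,α) = {x}. -/

import Mathlib

noncomputable section

open Set

/-- The first Heisenberg group as `ℝ³`. -/
abbrev Hei : Type := ℝ × ℝ × ℝ

/-- The Heisenberg group product:
`x · y = x + y + (x₁,₁ y₁,₂ − y₁,₁ x₁,₂) e₃`. -/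
def hmul (x y : Hei) : Hei :=
  (x.1 + y.1, x.2.1 + y.2.1, x.2.2 + y.2.2 + (x.1 * y.2.1 - y.1 * x.2.1))

/-- The Heisenberg group inverse `x⁻¹ = -x`. -/
def hinv (x : Hei) : Hei := (-x.1, -x.2.1, -x.2.2)

/-- The intrinsic dilation `δ_r(x) = r x₁ + r² x₂`. -/
def hdil (r : ℝ) (x : Hei) : Hei := (r * x.1, r * x.2.1, r ^ 2 * x.2.2)

/-- The homogeneous norm `‖x‖ = max {|x₁|, √|x₂|}`. -/
def hnorm (x : Hei) : ℝ :=
  max (Real.sqrt (x.1 ^ 2 + x.2.1 ^ 2)) (Real.sqrt |x.2.2|)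

/-- The homogeneous distance `d(x,y) = ‖x⁻¹ · y‖`. -/
def hdist (x y : Hei) : ℝ := hnorm (hmul (hinv x) y)

/-- `f` is (Pansu) differentiable at `x` with differential `L`: `L` is linear (bundled),
homogeneous with respect to the intrinsic dilations, and
`f y = f x + L (x⁻¹ · y) + o (d (x, y))` as `d (x, y) → 0`. -/
def IsHDerivAt {F : Type*} [NormedAddCommGroup F] [NormedSpace ℝ F]
    (f : Hei → F) (L : Hei →L[ℝ] F) (x : Hei) : Prop :=
  (∀ r : ℝ, 0 < r → ∀ z : Hei, L (hdil r z) = r • L z) ∧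
  ∀ ε : ℝ, 0 < ε → ∃ δ : ℝ, 0 < δ ∧ ∀ y : Hei, hdist x y ≤ δ →
    ‖f y - f x - L (hmul (hinv x) y)‖ ≤ ε * hdist x y

/-- `f ∈ C¹_H(Ω, F)` with horizontal gradient `gradf`: `f` is differentiable at every point
of `Ω` with differential `gradf x`, depending continuously on `x ∈ Ω`. -/
def C1H {F : Type*} [NormedAddCommGroup F] [NormedSpace ℝ F]
    (Ω : Set Hei) (f : Hei → F) (gradf : Hei → Hei →L[ℝ] F) : Prop :=
  (∀ x ∈ Ω, IsHDerivAt f (gradf x) x) ∧ ContinuousOn gradf Ω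

/-- The closed intrinsic cone with vertex at the origin, base `H₂`, axis `H₁`, width `r`
and opening `α`: `C_r(α) = { x : √|x₂| ≤ α |x₁| ≤ α r }`. -/
def coneAtOrigin (α r : ℝ) : Set Hei :=
  {x : Hei | Real.sqrt |x.2.2| ≤ α * Real.sqrt (x.1 ^ 2 + x.2.1 ^ 2) ∧
    α * Real.sqrt (x.1 ^ 2 + x.2.1 ^ 2) ≤ α * r}

/-- The closed intrinsic cone with vertex `p`: `C_r(p, α) = p · C_r(α)`. -/
def coneAt (p : Hei) (α r : ℝ) : Set Hei := hmul p '' coneAtOrigin α r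

/-- **Cone property of level sets.** Let `f ∈ C¹_H(Ω, ℝ²)` with `∇_H f (x)` surjective for
every `x ∈ Ω`. Then every level set `S = f⁻¹(z)` has the cone property: for every `p ∈ S`
there is a neighbourhood `U` of `p` such that for every `α > 0` there exists `r > 0`
(depending on `α` and `U`) such that `S ∩ C_r(x, α) = {x}` for all `x ∈ U ∩ S`. -/
-- auxiliary algebra lemmas
private def E1 : Hei := ((1:ℝ), (0:ℝ), (0:ℝ))
private def E2 : Hei := ((0:ℝ), (1:ℝ), (0:ℝ))

lemma hmul_def (a₁ b₁ c₁ a₂ b₂ c₂ : ℝ) :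
    hmul (a₁, b₁, c₁) (a₂, b₂, c₂) = (a₁ + a₂, b₁ + b₂, c₁ + c₂ + (a₁ * b₂ - a₂ * b₁)) := rfl

lemma hmul_assoc (x y z : Hei) : hmul (hmul x y) z = hmul x (hmul y z) := by
  simp only [hmul, Prod.mk.injEq]
  refine ⟨by ring, by ring, by ring⟩

lemma hmul_zero (x : Hei) : hmul x 0 = x := by
  simp only [hmul]
  simp [Prod.ext_iff]

lemma hinv_hmul_cancel (x w : Hei) : hmul (hinv x) (hmul x w) = w := by
  obtain ⟨x1, x2, x3⟩ := x
  obtain ⟨w1, w2, w3⟩ := w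
  simp only [hmul, hinv, Prod.mk.injEq]
  refine ⟨by ring, by ring, by ring⟩

lemma hdist_hmul (x w : Hei) : hdist x (hmul x w) = hnorm w := by
  rw [hdist, hinv_hmul_cancel]

lemma smul_E1 (t : ℝ) : t • E1 = ((t:ℝ), (0:ℝ), (0:ℝ)) := by
  simp [E1, Prod.smul_def]

lemma smul_E2 (t : ℝ) : t • E2 = ((0:ℝ), (t:ℝ), (0:ℝ)) := by
  simp [E2, Prod.smul_def]

lemma hmul_smul_E1 (s h : ℝ) : hmul (s • E1) (h • E1) = (s + h) • E1 := by
  rw [smul_E1, smul_E1, smul_E1, hmul_def]; norm_num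

lemma hmul_smul_E2 (s h : ℝ) : hmul (s • E2) (h • E2) = (s + h) • E2 := by
  rw [smul_E2, smul_E2, smul_E2, hmul_def]; norm_num

lemma hnorm_smul_E1 (h : ℝ) : hnorm (h • E1) = |h| := by
  rw [smul_E1, hnorm]
  simp [Real.sqrt_sq_eq_abs, abs_nonneg]

lemma hnorm_smul_E2 (h : ℝ) : hnorm (h • E2) = |h| := by
  rw [smul_E2, hnorm]
  simp [Real.sqrt_sq_eq_abs, abs_nonneg]

lemma abs_le_of_mem_uIcc {t ℓ : ℝ} (h : t ∈ Set.uIcc 0 ℓ) : |t| ≤ |ℓ| := by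
  rcases Set.mem_uIcc.1 h with ⟨h1, h2⟩ | ⟨h1, h2⟩
  · rw [abs_of_nonneg h1]; exact h2.trans (le_abs_self ℓ)
  · rw [abs_of_nonpos h2]; have : -ℓ ≤ |ℓ| := neg_le_abs ℓ; linarith

lemma hei_norm_le {u : Hei} {M : ℝ} (h1 : |u.1| ≤ M) (h2 : |u.2.1| ≤ M) (h3 : |u.2.2| ≤ M) :
    ‖u‖ ≤ M := by
  simp only [Prod.norm_def, Real.norm_eq_abs, max_le_iff]
  exact ⟨h1, h2, h3⟩

lemma norm_E1 : ‖E1‖ = 1 := by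
  simp [E1, Prod.norm_def, Real.norm_eq_abs]

lemma norm_E2 : ‖E2‖ = 1 := by
  simp [E2, Prod.norm_def, Real.norm_eq_abs]

lemma vert_zero (L : Hei →L[ℝ] (ℝ × ℝ))
    (hL : ∀ r : ℝ, 0 < r → ∀ z : Hei, L (hdil r z) = r • L z) (c : ℝ) :
    L ((0:ℝ), (0:ℝ), c) = 0 := by
  have h := hL 2 (by norm_num) ((0:ℝ), (0:ℝ), c)
  have h4 : hdil 2 ((0:ℝ), (0:ℝ), c) = (4:ℝ) • (((0:ℝ), (0:ℝ), c) : Hei) := by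
    simp only [hdil, Prod.smul_def, smul_eq_mul]; norm_num
  rw [h4, map_smul] at h
  have h2 : ((4:ℝ) - 2) • L ((0:ℝ), (0:ℝ), c) = 0 := by
    rw [sub_smul, h, sub_self]
  have : ((4:ℝ) - 2) ≠ 0 := by norm_num
  simpa [this] using h2

lemma clm_horiz (L : Hei →L[ℝ] (ℝ × ℝ))
    (hL : ∀ r : ℝ, 0 < r → ∀ z : Hei, L (hdil r z) = r • L z) (v : Hei) :
    L v = v.1 • L E1 + v.2.1 • L E2 := by
  have hv : v = v.1 • E1 + v.2.1 • E2 + (((0:ℝ), (0:ℝ), v.2.2) : Hei) := by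
    rw [smul_E1, smul_E2]
    simp [Prod.ext_iff]
  calc L v = L (v.1 • E1 + v.2.1 • E2 + (((0:ℝ), (0:ℝ), v.2.2) : Hei)) := by rw [← hv]
    _ = v.1 • L E1 + v.2.1 • L E2 := by
        rw [map_add, map_add, map_smul, map_smul, vert_zero L hL, add_zero]
lemma hasDerivAt_line (f : Hei → ℝ × ℝ) (L : Hei →L[ℝ] (ℝ × ℝ)) (x e : Hei) (t : ℝ)
    (he : ∀ s h : ℝ, hmul (s • e) (h • e) = (s + h) • e)
    (hne : ∀ h : ℝ, hnorm (h • e) = |h|)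
    (hd : IsHDerivAt f L (hmul x (t • e))) :
    HasDerivAt (fun s => f (hmul x (s • e))) (L e) t := by
  rw [hasDerivAt_iff_isLittleO, Asymptotics.isLittleO_iff]
  intro C hC
  obtain ⟨δ, hδ, hδ'⟩ := hd.2 C hC
  rw [Metric.eventually_nhds_iff]
  refine ⟨δ, hδ, ?_⟩
  intro s hs
  have key : hmul x (s • e) = hmul (hmul x (t • e)) ((s - t) • e) := by
    rw [hmul_assoc, he t (s - t)]
    norm_num
  have hdd : hdist (hmul x (t • e)) (hmul x (s • e)) = |s - t| := by
    rw [key, hdist_hmul, hne]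
  have hst : |s - t| ≤ δ := by
    rw [Real.dist_eq] at hs; exact hs.le
  have h1 := hδ' (hmul x (s • e)) (by rw [hdd]; exact hst)
  rw [hdd] at h1
  have h2 : hmul (hinv (hmul x (t • e))) (hmul x (s • e)) = (s - t) • e := by
    rw [key, hinv_hmul_cancel]
  rw [h2, map_smul] at h1
  simpa [Real.norm_eq_abs] using h1

lemma step_est (Ω : Set Hei) (f : Hei → ℝ × ℝ) (gradf : Hei → Hei →L[ℝ] (ℝ × ℝ))
    (hf : C1H Ω f gradf) (q e : Hei) (ℓ : ℝ) (M : ℝ × ℝ) (ε : ℝ)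
    (he : ∀ s h : ℝ, hmul (s • e) (h • e) = (s + h) • e)
    (hne : ∀ h : ℝ, hnorm (h • e) = |h|)
    (hin : ∀ t ∈ Set.uIcc (0:ℝ) ℓ,
      hmul q (t • e) ∈ Ω ∧ ‖gradf (hmul q (t • e)) e - M‖ ≤ ε) :
    ‖f (hmul q (ℓ • e)) - f q - ℓ • M‖ ≤ ε * |ℓ| := by
  have hq0 : hmul q ((0:ℝ) • e) = q := by rw [zero_smul, hmul_zero]
  have hpath : Continuous fun s : ℝ => hmul q (s • e) := by
    unfold hmul
    fun_prop
  have hder : ∀ t ∈ Set.uIcc (0:ℝ) ℓ,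
      HasDerivAt (fun s => f (hmul q (s • e))) (gradf (hmul q (t • e)) e) t := by
    intro t ht
    exact hasDerivAt_line f (gradf (hmul q (t • e))) q e t he hne (hf.1 _ (hin t ht).1)
  have hcont : ContinuousOn (fun t : ℝ => gradf (hmul q (t • e)) e) (Set.uIcc 0 ℓ) := by
    apply ContinuousOn.clm_apply _ continuousOn_const
    exact hf.2.comp hpath.continuousOn (fun t ht => (hin t ht).1)
  have hint : IntervalIntegrable (fun t : ℝ => gradf (hmul q (t • e)) e)
      MeasureTheory.volume 0 ℓ := hcont.intervalIntegrable
  have hftc : ∫ t in (0:ℝ)..ℓ, gradf (hmul q (t • e)) e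
      = f (hmul q (ℓ • e)) - f q := by
    have h0 := intervalIntegral.integral_eq_sub_of_hasDerivAt hder hint
    rwa [hq0] at h0
  have hsub : f (hmul q (ℓ • e)) - f q - ℓ • M
      = ∫ t in (0:ℝ)..ℓ, (gradf (hmul q (t • e)) e - M) := by
    rw [intervalIntegral.integral_sub hint intervalIntegrable_const, hftc,
      intervalIntegral.integral_const, sub_zero]
  rw [hsub]
  have := intervalIntegral.norm_integral_le_of_norm_le_const
    (C := ε) (f := fun t : ℝ => gradf (hmul q (t • e)) e - M) (a := (0:ℝ)) (b := ℓ)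
    (fun t ht => (hin t (Set.uIoc_subset_uIcc ht)).2)
  simpa using this
lemma abs_sum3 {x1 x2 x3 Q : ℝ} (h1 : |x1| ≤ Q) (h2 : |x2| ≤ Q) (h3 : |x3| ≤ Q) :
    |x1 + x2 + x3| ≤ 3 * Q := by
  have a1 := abs_add_le (x1 + x2) x3
  have a2 := abs_add_le x1 x2
  linarith

lemma abs_sum6 {x1 x2 x3 x4 x5 x6 Q : ℝ} (h1 : |x1| ≤ Q) (h2 : |x2| ≤ Q) (h3 : |x3| ≤ Q)
    (h4 : |x4| ≤ Q) (h5 : |x5| ≤ Q) (h6 : |x6| ≤ Q) :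
    |x1 + x2 + x3 + x4 + x5 + x6| ≤ 6 * Q := by
  have a1 := abs_add_le (x1 + x2 + x3 + x4 + x5) x6
  have a2 := abs_add_le (x1 + x2 + x3 + x4) x5
  have a3 := abs_add_le (x1 + x2 + x3) x4
  have a4 := abs_add_le (x1 + x2) x3
  have a5 := abs_add_le x1 x2
  linarith

lemma abs_mul_le {u v P : ℝ} (hP : 0 ≤ P) (hu : |u| ≤ P) (hv : |v| ≤ P) : |u * v| ≤ P ^ 2 := by
  rw [abs_mul]
  nlinarith [abs_nonneg u, abs_nonneg v]

lemma sign_facts (c : ℝ) : |Real.sign c| ≤ 1 ∧ Real.sign c * |c| = c := by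
  rcases lt_trichotomy c 0 with h | h | h
  · rw [Real.sign_of_neg h, abs_of_neg h]; norm_num
  · subst h; simp
  · rw [Real.sign_of_pos h, abs_of_pos h]; norm_num

lemma horiz_lower (L : Hei →L[ℝ] (ℝ × ℝ))
    (hL : ∀ r : ℝ, 0 < r → ∀ z : Hei, L (hdil r z) = r • L z)
    (hs : Function.Surjective L) :
    ∃ c0 : ℝ, 0 < c0 ∧ ∀ a b : ℝ, c0 * max |a| |b| ≤ ‖L ((a:ℝ), b, (0:ℝ))‖ := by
  set j : (ℝ × ℝ) →ₗ[ℝ] Hei :=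
    { toFun := fun w => (w.1, w.2, 0)
      map_add' := by intro u v; simp [Prod.ext_iff]
      map_smul' := by intro r u; simp [Prod.ext_iff] } with hj
  set T : (ℝ × ℝ) →ₗ[ℝ] (ℝ × ℝ) := (L : Hei →ₗ[ℝ] (ℝ × ℝ)).comp j with hT
  have hTval : ∀ a b : ℝ, T (a, b) = L ((a:ℝ), b, (0:ℝ)) := fun a b => rfl
  have hTsurj : Function.Surjective T := by
    intro u
    obtain ⟨v, hv⟩ := hs u
    refine ⟨(v.1, v.2.1), ?_⟩
    have heq : T (v.1, v.2.1) = L ((v.1 : ℝ), v.2.1, (0:ℝ)) := rfl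
    rw [heq]
    have h2 : ((v.1, v.2.1, (0:ℝ)) : Hei) = v - (((0:ℝ), (0:ℝ), v.2.2) : Hei) := by
      simp [Prod.ext_iff]
    rw [h2, map_sub, vert_zero L hL, sub_zero, hv]
  have hTinj : Function.Injective T := LinearMap.injective_iff_surjective.2 hTsurj
  set e := LinearEquiv.ofBijective T ⟨hTinj, hTsurj⟩ with he
  set S := LinearMap.toContinuousLinearMap (e.symm : (ℝ × ℝ) →ₗ[ℝ] (ℝ × ℝ)) with hS
  refine ⟨(‖S‖ + 1)⁻¹, by positivity, ?_⟩
  intro a b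
  have h2 : S (T (a, b)) = ((a, b) : ℝ × ℝ) := by
    have h3 : T (a, b) = e (a, b) := rfl
    rw [h3]
    show e.symm (e (a, b)) = (a, b)
    exact e.symm_apply_apply _
  have h1 : ‖((a, b) : ℝ × ℝ)‖ ≤ (‖S‖ + 1) * ‖T (a, b)‖ := by
    calc ‖((a, b) : ℝ × ℝ)‖ = ‖S (T (a, b))‖ := by rw [h2]
      _ ≤ ‖S‖ * ‖T (a, b)‖ := S.le_opNorm _
      _ ≤ (‖S‖ + 1) * ‖T (a, b)‖ := by nlinarith [norm_nonneg (T (a, b))]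
  have hnab : ‖((a, b) : ℝ × ℝ)‖ = max |a| |b| := by
    simp [Prod.norm_def, Real.norm_eq_abs]
  rw [hTval] at h1
  rw [← hnab, inv_mul_le_iff₀ (by positivity)]
  linarith
lemma abs_sub_le' (a b : ℝ) : |a - b| ≤ |a| + |b| := by
  calc |a - b| = |a + -b| := by ring_nf
    _ ≤ |a| + |-b| := abs_add_le _ _
    _ = |a| + |b| := by rw [abs_neg]

lemma abs_mul_le2 {u v Pu Pv : ℝ} (hPu : 0 ≤ Pu) (hu : |u| ≤ Pu) (hv : |v| ≤ Pv) :
    |u * v| ≤ Pu * Pv := by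
  rw [abs_mul]
  exact mul_le_mul hu hv (abs_nonneg v) hPu

lemma norm_add6 {F : Type*} [NormedAddCommGroup F] (A B C D E G : F) :
    ‖A + B + C + D + E + G‖ ≤ ‖A‖ + ‖B‖ + ‖C‖ + ‖D‖ + ‖E‖ + ‖G‖ := by
  have a1 := norm_add_le (A + B + C + D + E) G
  have a2 := norm_add_le (A + B + C + D) E
  have a3 := norm_add_le (A + B + C) D
  have a4 := norm_add_le (A + B) C
  have a5 := norm_add_le A B
  linarith
lemma sqrt_le_imp_sq {x A : ℝ} (hA : 0 ≤ A) (h : Real.sqrt x ≤ A) (hx : 0 ≤ x) : x ≤ A ^ 2 := by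
  nlinarith [Real.sq_sqrt hx, Real.sqrt_nonneg x]

lemma sqrt_half_le {u α m : ℝ} (hm : 0 ≤ m) (hα : 0 ≤ α) (hu : 0 ≤ u)
    (h : u ≤ (α ^ 2 + 1) * m ^ 2) : Real.sqrt (u / 2) ≤ (α + 1) * m := by
  have h1 : u / 2 ≤ ((α + 1) * m) ^ 2 := by nlinarith [mul_nonneg hα hm, sq_nonneg m]
  calc Real.sqrt (u / 2) ≤ Real.sqrt (((α + 1) * m) ^ 2) := Real.sqrt_le_sqrt h1
    _ = (α + 1) * m := Real.sqrt_sq (by positivity)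

lemma sq_le_of_le_one {m r : ℝ} (hm0 : 0 ≤ m) (hmr : m ≤ r) (hr1 : r ≤ 1) : m ^ 2 ≤ r := by
  nlinarith

lemma r_choice {mm Kα η ρ : ℝ} (hmm0 : 0 < mm) (hmm1 : mm ≤ 1) (hmmη : mm ≤ η)
    (hmmρ : mm ≤ ρ) (hKα : 0 < Kα) :
    0 < mm / (2 * (Kα + 1)) ∧ mm / (2 * (Kα + 1)) ≤ 1 ∧
      Kα * (mm / (2 * (Kα + 1))) < η ∧ Kα * (mm / (2 * (Kα + 1))) ≤ ρ / 2 := by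
  have hD : 0 < 2 * (Kα + 1) := by linarith
  have hr0 : 0 < mm / (2 * (Kα + 1)) := div_pos hmm0 hD
  have hrD : mm / (2 * (Kα + 1)) * (2 * (Kα + 1)) = mm := div_mul_cancel₀ mm (ne_of_gt hD)
  refine ⟨hr0, by nlinarith, by nlinarith, by nlinarith⟩

lemma Kr_bounds {α B m r P Kα : ℝ} (hα : 0 < α) (hB : 0 ≤ B) (hm0 : 0 ≤ m) (hmr : m ≤ r)
    (hr1 : r ≤ 1) (hr0 : 0 < r) (hP : P = (α + 2) * m)
    (hK : Kα = (α + 2) * (3 + 6 * (α + 2) + 6 * B)) :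
    3 * P ≤ Kα * r ∧ 6 * P ^ 2 + 6 * B * P ≤ Kα * r := by
  subst hP hK
  have ha2 : (0:ℝ) ≤ α + 2 := by linarith
  have h1 : (α + 2) * m ≤ (α + 2) * r := mul_le_mul_of_nonneg_left hmr ha2
  have h2 : (0:ℝ) ≤ (α + 2) * r := mul_nonneg ha2 hr0.le
  have hm2r : m ^ 2 ≤ r := sq_le_of_le_one hm0 hmr hr1
  have h3 : 6 * (α + 2) ^ 2 * m ^ 2 ≤ 6 * (α + 2) ^ 2 * r :=
    mul_le_mul_of_nonneg_left hm2r (by positivity)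
  have h4 : 6 * B * ((α + 2) * m) ≤ 6 * B * ((α + 2) * r) :=
    mul_le_mul_of_nonneg_left h1 (by positivity)
  constructor
  · nlinarith [h1, h2, mul_nonneg (mul_nonneg hB ha2) hr0.le,
      mul_nonneg (mul_nonneg ha2 ha2) hr0.le]
  · nlinarith [h1, h2, h3, h4]
set_option maxHeartbeats 4000000 in
theorem level_set_cone_property
    (Ω : Set Hei) (hΩ : IsOpen Ω) (f : Hei → ℝ × ℝ)
    (gradf : Hei → Hei →L[ℝ] (ℝ × ℝ)) (hf : C1H Ω f gradf)
    (hsurj : ∀ x ∈ Ω, Function.Surjective (gradf x)) (z : ℝ × ℝ) :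
    ∀ p ∈ {x ∈ Ω | f x = z}, ∃ U ∈ nhds p, ∀ α : ℝ, 0 < α → ∃ r : ℝ, 0 < r ∧
      ∀ x ∈ U ∩ {x ∈ Ω | f x = z},
        {x ∈ Ω | f x = z} ∩ coneAt x α r = {x} := by
  rintro p ⟨hpΩ, hpz⟩
  obtain ⟨c0, hc0, hc0'⟩ := horiz_lower (gradf p) (hf.1 p hpΩ).1 (hsurj p hpΩ)
  set c : ℝ := c0 / 4 with hc_def
  have hc : 0 < c := by positivity
  obtain ⟨ρ1, hρ1, hball1⟩ : ∃ ρ1 : ℝ, 0 < ρ1 ∧ Metric.closedBall p ρ1 ⊆ Ω := by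
    obtain ⟨ε, hε, hb⟩ := Metric.isOpen_iff.1 hΩ p hpΩ
    exact ⟨ε / 2, by positivity, (Metric.closedBall_subset_ball (by linarith)).trans hb⟩
  obtain ⟨ρ2, hρ2, hball2⟩ :
      ∃ ρ2 : ℝ, 0 < ρ2 ∧ ∀ q, dist q p ≤ ρ2 → ‖gradf q - gradf p‖ ≤ c := by
    have hca : ContinuousAt gradf p := hf.2.continuousAt (hΩ.mem_nhds hpΩ)
    obtain ⟨δ, hδ, hδ'⟩ := Metric.continuousAt_iff.1 hca c hc
    refine ⟨δ / 2, by positivity, fun q hq => ?_⟩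
    have h2 := hδ' (show dist q p < δ by linarith)
    rw [dist_eq_norm] at h2
    exact h2.le
  set ρ := min ρ1 ρ2 with hρ_def
  have hρ : 0 < ρ := lt_min hρ1 hρ2
  have hKΩ : Metric.closedBall p ρ ⊆ Ω :=
    (Metric.closedBall_subset_closedBall (min_le_left _ _)).trans hball1
  have hgradc : ∀ q ∈ Metric.closedBall p ρ, ‖gradf q - gradf p‖ ≤ c := fun q hq =>
    hball2 q (le_trans (Metric.mem_closedBall.1 hq) (min_le_right _ _))
  refine ⟨Metric.ball p (ρ / 2), Metric.ball_mem_nhds p (by positivity), ?_⟩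
  intro α hα
  set Cα : ℝ := 4 * α + 6 with hCα_def
  have hCα : 0 < Cα := by rw [hCα_def]; linarith
  set ε' : ℝ := c / (2 * Cα) with hε'_def
  have hε' : 0 < ε' := by positivity
  obtain ⟨η, hη, hηuc⟩ : ∃ η : ℝ, 0 < η ∧ ∀ q1 ∈ Metric.closedBall p ρ,
      ∀ q2 ∈ Metric.closedBall p ρ, dist q1 q2 < η → ‖gradf q1 - gradf q2‖ ≤ ε' := by
    have hK : IsCompact (Metric.closedBall p ρ) := isCompact_closedBall p ρ
    have huc := hK.uniformContinuousOn_of_continuous (hf.2.mono hKΩ)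
    obtain ⟨δ, hδ, hδ'⟩ := Metric.uniformContinuousOn_iff.1 huc ε' hε'
    refine ⟨δ, hδ, fun q1 h1 q2 h2 hd => ?_⟩
    have h3 := hδ' q1 h1 q2 h2 hd
    rw [dist_eq_norm] at h3
    exact h3.le
  set B : ℝ := ‖p‖ + ρ with hB_def
  have hB : 0 ≤ B := by positivity
  set Kα : ℝ := (α + 2) * (3 + 6 * (α + 2) + 6 * B) with hKα_def
  have hKα : 0 < Kα := by
    rw [hKα_def]
    exact mul_pos (by linarith) (by linarith)
  set mm : ℝ := min 1 (min η ρ) with hmm_def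
  have hmm0 : 0 < mm := lt_min one_pos (lt_min hη hρ)
  have hmm1 : mm ≤ 1 := min_le_left _ _
  have hmmη : mm ≤ η := le_trans (min_le_right _ _) (min_le_left _ _)
  have hmmρ : mm ≤ ρ := le_trans (min_le_right _ _) (min_le_right _ _)
  obtain ⟨hrpos, hr1, hrη, hrρ⟩ := r_choice hmm0 hmm1 hmmη hmmρ hKα
  set r : ℝ := mm / (2 * (Kα + 1)) with hr_def
  refine ⟨r, hrpos, ?_⟩
  rintro x ⟨hxU, hxΩ, hxz⟩
  have hxball : x ∈ Metric.closedBall p ρ := by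
    have hd := Metric.mem_ball.1 hxU
    exact Metric.mem_closedBall.2 (by linarith)
  have hG := (hf.1 x hxΩ).1
  ext y
  simp only [Set.mem_inter_iff, Set.mem_setOf_eq, Set.mem_singleton_iff, coneAt,
    Set.mem_image]
  constructor
  · rintro ⟨⟨hyΩ, hyz⟩, v, hvcone, hveq⟩
    obtain ⟨a, b, cv⟩ := v
    have hvc : _ ∧ _ := hvcone
    have hv1 : Real.sqrt |cv| ≤ α * Real.sqrt (a ^ 2 + b ^ 2) := hvc.1
    have hv2 : α * Real.sqrt (a ^ 2 + b ^ 2) ≤ α * r := hvc.2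
    set m : ℝ := Real.sqrt (a ^ 2 + b ^ 2) with hm_def
    have hm0 : 0 ≤ m := Real.sqrt_nonneg _
    have hmr : m ≤ r := le_of_mul_le_mul_left hv2 hα
    have ha : |a| ≤ m := by
      rw [← Real.sqrt_sq_eq_abs]
      exact Real.sqrt_le_sqrt (by linarith [sq_nonneg b])
    have hb : |b| ≤ m := by
      rw [← Real.sqrt_sq_eq_abs]
      exact Real.sqrt_le_sqrt (by linarith [sq_nonneg a])
    have hcv : |cv| ≤ α ^ 2 * m ^ 2 := by
      have h1 := sqrt_le_imp_sq (mul_nonneg hα.le hm0) hv1 (abs_nonneg cv)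
      calc |cv| ≤ (α * m) ^ 2 := h1
        _ = α ^ 2 * m ^ 2 := by ring
    set c' : ℝ := cv - a * b with hc'_def
    set s₁ : ℝ := Real.sqrt (|c'| / 2) with hs₁_def
    set s₂ : ℝ := Real.sign c' * s₁ with hs₂_def
    have hs₁0 : 0 ≤ s₁ := Real.sqrt_nonneg _
    have hs₁sq : s₁ ^ 2 = |c'| / 2 := Real.sq_sqrt (by positivity)
    have hab : |a * b| ≤ m ^ 2 := by
      have := abs_mul_le2 hm0 ha hb
      calc |a * b| ≤ m * m := this
        _ = m ^ 2 := by ring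
    have hc'le : |c'| ≤ (α ^ 2 + 1) * m ^ 2 := by
      have h2 := abs_sub_le' cv (a * b)
      rw [← hc'_def] at h2
      linarith
    have hs₁m : s₁ ≤ (α + 1) * m := by
      rw [hs₁_def]
      exact sqrt_half_le hm0 hα.le (abs_nonneg c') hc'le
    have hsf := sign_facts c'
    have hs₂abs : |s₂| ≤ s₁ := by
      rw [hs₂_def, abs_mul, abs_of_nonneg hs₁0]
      calc |Real.sign c'| * s₁ ≤ 1 * s₁ := mul_le_mul_of_nonneg_right hsf.1 hs₁0
        _ = s₁ := one_mul s₁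
    have h2s : 2 * (s₁ * s₂) = c' := by
      have h1 : s₁ * s₂ = Real.sign c' * s₁ ^ 2 := by rw [hs₂_def]; ring
      rw [h1, hs₁sq]
      calc 2 * (Real.sign c' * (|c'| / 2)) = Real.sign c' * |c'| := by ring
        _ = c' := hsf.2
    set P : ℝ := (α + 2) * m with hP_def
    have hP0 : 0 ≤ P := by
      rw [hP_def]; exact mul_nonneg (by linarith) hm0
    have hmP : m ≤ P := by
      rw [hP_def]
      have h9 := mul_nonneg (show (0:ℝ) ≤ α + 1 by linarith) hm0
      linarith [h9]
    have hs₁P : s₁ ≤ P := by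
      rw [hP_def]
      linarith [hs₁m, hm0]
    have hs₁absP : |s₁| ≤ P := by rwa [abs_of_nonneg hs₁0]
    have haP : |a| ≤ P := ha.trans hmP
    have hbP : |b| ≤ P := hb.trans hmP
    have hs₂P : |s₂| ≤ P := hs₂abs.trans hs₁P
    have hKrb := Kr_bounds hα hB hm0 hmr hr1 hrpos hP_def hKα_def
    -- every path point is a good point
    have hgood : ∀ w : Hei, |w.1| ≤ 3 * P → |w.2.1| ≤ 3 * P → |w.2.2| ≤ 6 * P ^ 2 →
        hmul x w ∈ Metric.closedBall p ρ ∧ ‖gradf (hmul x w) - gradf x‖ ≤ ε' := by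
      intro w h1 h2 h3
      have hx1 : |x.1| ≤ B := by
        have l1 : ‖x.1‖ ≤ ‖x‖ := norm_fst_le x
        have l2 : ‖x‖ ≤ ‖p‖ + ‖x - p‖ := by
          have l4 := norm_add_le p (x - p)
          simpa using l4
        have l3 : ‖x - p‖ ≤ ρ := by
          rw [← dist_eq_norm]; exact Metric.mem_closedBall.1 hxball
        simp only [Real.norm_eq_abs] at l1
        rw [hB_def]; linarith
      have hx2 : |x.2.1| ≤ B := by
        have l1 : ‖x.2.1‖ ≤ ‖x.2‖ := norm_fst_le x.2
        have l0 : ‖x.2‖ ≤ ‖x‖ := norm_snd_le x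
        have l2 : ‖x‖ ≤ ‖p‖ + ‖x - p‖ := by
          have l4 := norm_add_le p (x - p)
          simpa using l4
        have l3 : ‖x - p‖ ≤ ρ := by
          rw [← dist_eq_norm]; exact Metric.mem_closedBall.1 hxball
        simp only [Real.norm_eq_abs] at l1
        rw [hB_def]; linarith
      have hsub : hmul x w - x = ((w.1 : ℝ), w.2.1, w.2.2 + (x.1 * w.2.1 - w.1 * x.2.1)) := by
        simp only [hmul, Prod.ext_iff, Prod.fst_sub, Prod.snd_sub]
        refine ⟨by ring, by ring, by ring⟩
      have hdistx : dist (hmul x w) x ≤ Kα * r := by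
        rw [dist_eq_norm, hsub]
        apply hei_norm_le
        · show |w.1| ≤ Kα * r
          linarith [hKrb.1]
        · show |w.2.1| ≤ Kα * r
          linarith [hKrb.1]
        · show |w.2.2 + (x.1 * w.2.1 - w.1 * x.2.1)| ≤ Kα * r
          have e1 : |x.1 * w.2.1| ≤ B * (3 * P) := abs_mul_le2 hB hx1 h2
          have e2 : |w.1 * x.2.1| ≤ (3 * P) * B := abs_mul_le2 (by linarith) h1 hx2
          have e3 := abs_add_le w.2.2 (x.1 * w.2.1 - w.1 * x.2.1)
          have e4 := abs_sub_le' (x.1 * w.2.1) (w.1 * x.2.1)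
          have e5 : 6 * P ^ 2 + 6 * B * P ≤ Kα * r := hKrb.2
          linarith
      constructor
      · apply Metric.mem_closedBall.2
        have t1 := dist_triangle (hmul x w) x p
        have t2 : dist x p < ρ / 2 := Metric.mem_ball.1 hxU
        linarith
      · exact hηuc _ (by
          apply Metric.mem_closedBall.2
          have t1 := dist_triangle (hmul x w) x p
          have t2 : dist x p < ρ / 2 := Metric.mem_ball.1 hxU
          linarith) x hxball (lt_of_le_of_lt hdistx hrη)
    have happly : ∀ E : Hei, ‖E‖ = 1 → ∀ w : Hei, |w.1| ≤ 3 * P → |w.2.1| ≤ 3 * P →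
        |w.2.2| ≤ 6 * P ^ 2 →
        hmul x w ∈ Ω ∧ ‖gradf (hmul x w) E - gradf x E‖ ≤ ε' := by
      intro E hE w h1 h2 h3
      obtain ⟨hmem, hdev⟩ := hgood w h1 h2 h3
      refine ⟨hKΩ hmem, ?_⟩
      calc ‖gradf (hmul x w) E - gradf x E‖ = ‖(gradf (hmul x w) - gradf x) E‖ := by
            rw [ContinuousLinearMap.sub_apply]
        _ ≤ ‖gradf (hmul x w) - gradf x‖ * ‖E‖ := ContinuousLinearMap.le_opNorm _ _
        _ ≤ ε' := by rw [hE, mul_one]; exact hdev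
    set G1 := gradf x E1 with hG1_def
    set G2 := gradf x E2 with hG2_def
    set q1 : Hei := hmul x ((a : ℝ), (0 : ℝ), (0 : ℝ)) with hq1
    set q2 : Hei := hmul x ((a : ℝ), b, a * b) with hq2
    set q3 : Hei := hmul x ((a + s₁ : ℝ), b, a * b - s₁ * b) with hq3
    set q4 : Hei := hmul x ((a + s₁ : ℝ), b + s₂, a * b - s₁ * b + (a + s₁) * s₂) with hq4
    set q5 : Hei := hmul x ((a : ℝ), b + s₂, a * b + a * s₂ + 2 * (s₁ * s₂)) with hq5
    have hP6 : (0:ℝ) ≤ 6 * P ^ 2 := by positivity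
    have hP3 : (0:ℝ) ≤ 3 * P := by linarith
    -- segment 1
    have hin1 : ∀ t ∈ Set.uIcc (0 : ℝ) a,
        hmul x (t • E1) ∈ Ω ∧ ‖gradf (hmul x (t • E1)) E1 - G1‖ ≤ ε' := by
      intro t ht
      have htP : |t| ≤ P := (abs_le_of_mem_uIcc ht).trans haP
      rw [smul_E1]
      refine happly E1 norm_E1 ((t : ℝ), (0 : ℝ), (0 : ℝ)) ?_ ?_ ?_
      · show |t| ≤ 3 * P
        linarith
      · show |(0:ℝ)| ≤ 3 * P
        simpa using hP3
      · show |(0:ℝ)| ≤ 6 * P ^ 2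
        simpa using hP6
    have S1 := step_est Ω f gradf hf x E1 a G1 ε' hmul_smul_E1 hnorm_smul_E1 hin1
    rw [smul_E1, ← hq1] at S1
    -- segment 2
    have hin2 : ∀ t ∈ Set.uIcc (0 : ℝ) b,
        hmul q1 (t • E2) ∈ Ω ∧ ‖gradf (hmul q1 (t • E2)) E2 - G2‖ ≤ ε' := by
      intro t ht
      have htP : |t| ≤ P := (abs_le_of_mem_uIcc ht).trans hbP
      have hrw : hmul q1 (t • E2) = hmul x ((a : ℝ), t, a * t) := by
        rw [hq1, smul_E2, hmul_assoc]
        congr 1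
        rw [hmul_def]
        simp only [Prod.mk.injEq]
        refine ⟨by ring, by ring, by ring⟩
      rw [hrw]
      refine happly E2 norm_E2 ((a : ℝ), t, a * t) ?_ ?_ ?_
      · show |a| ≤ 3 * P
        linarith
      · show |t| ≤ 3 * P
        linarith
      · show |a * t| ≤ 6 * P ^ 2
        have e := abs_mul_le2 hP0 haP htP
        linarith [sq_nonneg P]
    have S2 := step_est Ω f gradf hf q1 E2 b G2 ε' hmul_smul_E2 hnorm_smul_E2 hin2
    have hend2 : hmul q1 (b • E2) = q2 := by
      rw [hq1, hq2, smul_E2, hmul_assoc]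
      congr 1
      rw [hmul_def]
      simp only [Prod.mk.injEq]
      refine ⟨by ring, by ring, by ring⟩
    rw [hend2] at S2
    -- segment 3
    have hin3 : ∀ t ∈ Set.uIcc (0 : ℝ) s₁,
        hmul q2 (t • E1) ∈ Ω ∧ ‖gradf (hmul q2 (t • E1)) E1 - G1‖ ≤ ε' := by
      intro t ht
      have htP : |t| ≤ P := (abs_le_of_mem_uIcc ht).trans hs₁absP
      have hrw : hmul q2 (t • E1) = hmul x ((a + t : ℝ), b, a * b - t * b) := by
        rw [hq2, smul_E1, hmul_assoc]
        congr 1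
        rw [hmul_def]
        simp only [Prod.mk.injEq]
        refine ⟨trivial, by ring, by ring⟩
      rw [hrw]
      refine happly E1 norm_E1 ((a + t : ℝ), b, a * b - t * b) ?_ ?_ ?_
      · show |a + t| ≤ 3 * P
        have := abs_add_le a t
        linarith
      · show |b| ≤ 3 * P
        linarith
      · show |a * b - t * b| ≤ 6 * P ^ 2
        have e1 : |a * b| ≤ P * P := abs_mul_le2 hP0 haP hbP
        have e2 : |t * b| ≤ P * P := abs_mul_le2 hP0 htP hbP
        have e3 := abs_sub_le' (a * b) (t * b)
        linarith [sq_nonneg P]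
    have S3 := step_est Ω f gradf hf q2 E1 s₁ G1 ε' hmul_smul_E1 hnorm_smul_E1 hin3
    have hend3 : hmul q2 (s₁ • E1) = q3 := by
      rw [hq2, hq3, smul_E1, hmul_assoc]
      congr 1
      rw [hmul_def]
      simp only [Prod.mk.injEq]
      refine ⟨trivial, by ring, by ring⟩
    rw [hend3] at S3
    -- segment 4
    have hin4 : ∀ t ∈ Set.uIcc (0 : ℝ) s₂,
        hmul q3 (t • E2) ∈ Ω ∧ ‖gradf (hmul q3 (t • E2)) E2 - G2‖ ≤ ε' := by
      intro t ht
      have htP : |t| ≤ P := (abs_le_of_mem_uIcc ht).trans hs₂P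
      have hrw : hmul q3 (t • E2) = hmul x ((a + s₁ : ℝ), b + t, a * b - s₁ * b + (a + s₁) * t) := by
        rw [hq3, smul_E2, hmul_assoc]
        congr 1
        rw [hmul_def]
        simp only [Prod.mk.injEq]
        refine ⟨by ring, trivial, by ring⟩
      rw [hrw]
      have has : |a + s₁| ≤ 2 * P := by
        have := abs_add_le a s₁
        linarith
      refine happly E2 norm_E2 ((a + s₁ : ℝ), b + t, a * b - s₁ * b + (a + s₁) * t) ?_ ?_ ?_
      · show |a + s₁| ≤ 3 * P
        linarith
      · show |b + t| ≤ 3 * P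
        have := abs_add_le b t
        linarith
      · show |a * b - s₁ * b + (a + s₁) * t| ≤ 6 * P ^ 2
        have e1 : |a * b| ≤ P * P := abs_mul_le2 hP0 haP hbP
        have e2 : |s₁ * b| ≤ P * P := abs_mul_le2 hP0 hs₁absP hbP
        have e3 : |(a + s₁) * t| ≤ (2 * P) * P := abs_mul_le2 (by linarith) has htP
        have e4 := abs_add_le (a * b - s₁ * b) ((a + s₁) * t)
        have e5 := abs_sub_le' (a * b) (s₁ * b)
        linarith [sq_nonneg P]
    have S4 := step_est Ω f gradf hf q3 E2 s₂ G2 ε' hmul_smul_E2 hnorm_smul_E2 hin4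
    have hend4 : hmul q3 (s₂ • E2) = q4 := by
      rw [hq3, hq4, smul_E2, hmul_assoc]
      congr 1
      rw [hmul_def]
      simp only [Prod.mk.injEq]
      refine ⟨by ring, trivial, by ring⟩
    rw [hend4] at S4
    -- segment 5
    have hin5 : ∀ t ∈ Set.uIcc (0 : ℝ) (-s₁),
        hmul q4 (t • E1) ∈ Ω ∧ ‖gradf (hmul q4 (t • E1)) E1 - G1‖ ≤ ε' := by
      intro t ht
      have htP : |t| ≤ P := by
        have := abs_le_of_mem_uIcc ht
        rw [abs_neg] at this
        exact this.trans hs₁absP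
      have hrw : hmul q4 (t • E1) = hmul x
          ((a + s₁ + t : ℝ), b + s₂, a * b - s₁ * b + (a + s₁) * s₂ - t * (b + s₂)) := by
        rw [hq4, smul_E1, hmul_assoc]
        congr 1
        rw [hmul_def]
        simp only [Prod.mk.injEq]
        refine ⟨trivial, by ring, by ring⟩
      rw [hrw]
      have hbs : |b + s₂| ≤ 2 * P := by
        have := abs_add_le b s₂
        linarith
      refine happly E1 norm_E1
        ((a + s₁ + t : ℝ), b + s₂, a * b - s₁ * b + (a + s₁) * s₂ - t * (b + s₂)) ?_ ?_ ?_
      · show |a + s₁ + t| ≤ 3 * P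
        have e1 := abs_add_le (a + s₁) t
        have e2 := abs_add_le a s₁
        linarith
      · show |b + s₂| ≤ 3 * P
        linarith
      · show |a * b - s₁ * b + (a + s₁) * s₂ - t * (b + s₂)| ≤ 6 * P ^ 2
        have e1 : |a * b| ≤ P * P := abs_mul_le2 hP0 haP hbP
        have e2 : |s₁ * b| ≤ P * P := abs_mul_le2 hP0 hs₁absP hbP
        have e3 : |(a + s₁) * s₂| ≤ (2 * P) * P := by
          apply abs_mul_le2 (by linarith) _ hs₂P
          have := abs_add_le a s₁
          linarith
        have e4 : |t * (b + s₂)| ≤ P * (2 * P) := abs_mul_le2 hP0 htP hbs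
        have e5 := abs_sub_le' (a * b - s₁ * b + (a + s₁) * s₂) (t * (b + s₂))
        have e6 := abs_add_le (a * b - s₁ * b) ((a + s₁) * s₂)
        have e7 := abs_sub_le' (a * b) (s₁ * b)
        linarith [sq_nonneg P]
    have S5 := step_est Ω f gradf hf q4 E1 (-s₁) G1 ε' hmul_smul_E1 hnorm_smul_E1 hin5
    have hend5 : hmul q4 ((-s₁) • E1) = q5 := by
      rw [hq4, hq5, smul_E1, hmul_assoc]
      congr 1
      rw [hmul_def]
      simp only [Prod.mk.injEq]
      refine ⟨by ring, by ring, by ring⟩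
    rw [hend5] at S5
    -- segment 6
    have hin6 : ∀ t ∈ Set.uIcc (0 : ℝ) (-s₂),
        hmul q5 (t • E2) ∈ Ω ∧ ‖gradf (hmul q5 (t • E2)) E2 - G2‖ ≤ ε' := by
      intro t ht
      have htP : |t| ≤ P := by
        have := abs_le_of_mem_uIcc ht
        rw [abs_neg] at this
        exact this.trans hs₂P
      have hrw : hmul q5 (t • E2) = hmul x
          ((a : ℝ), b + s₂ + t, a * b + a * s₂ + 2 * (s₁ * s₂) + a * t) := by
        rw [hq5, smul_E2, hmul_assoc]
        congr 1
        rw [hmul_def]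
        simp only [Prod.mk.injEq]
        refine ⟨by ring, trivial, by ring⟩
      rw [hrw]
      refine happly E2 norm_E2
        ((a : ℝ), b + s₂ + t, a * b + a * s₂ + 2 * (s₁ * s₂) + a * t) ?_ ?_ ?_
      · show |a| ≤ 3 * P
        linarith
      · show |b + s₂ + t| ≤ 3 * P
        have e1 := abs_add_le (b + s₂) t
        have e2 := abs_add_le b s₂
        linarith
      · show |a * b + a * s₂ + 2 * (s₁ * s₂) + a * t| ≤ 6 * P ^ 2
        have e1 : |a * b| ≤ P * P := abs_mul_le2 hP0 haP hbP
        have e2 : |a * s₂| ≤ P * P := abs_mul_le2 hP0 haP hs₂P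
        have e3 : |s₁ * s₂| ≤ P * P := abs_mul_le2 hP0 hs₁absP hs₂P
        have e4 : |a * t| ≤ P * P := abs_mul_le2 hP0 haP htP
        have e5 := abs_add_le (a * b + a * s₂ + 2 * (s₁ * s₂)) (a * t)
        have e6 := abs_add_le (a * b + a * s₂) (2 * (s₁ * s₂))
        have e7 := abs_add_le (a * b) (a * s₂)
        have e8 : |2 * (s₁ * s₂)| ≤ 2 * (P * P) := by
          rw [abs_mul, abs_two]
          have := abs_nonneg (s₁ * s₂)
          linarith
        linarith [sq_nonneg P]
    have S6 := step_est Ω f gradf hf q5 E2 (-s₂) G2 ε' hmul_smul_E2 hnorm_smul_E2 hin6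
    have hend6 : hmul q5 ((-s₂) • E2) = hmul x ((a : ℝ), b, cv) := by
      rw [hq5, smul_E2, hmul_assoc]
      congr 1
      rw [hmul_def]
      simp only [Prod.mk.injEq]
      refine ⟨by ring, by ring, ?_⟩
      have h1 : c' = cv - a * b := hc'_def
      linarith [h2s]
    rw [hend6, hveq] at S6
    -- summation
    have hGv : gradf x ((a : ℝ), b, cv) = a • G1 + b • G2 := by
      have h := clm_horiz (gradf x) hG ((a : ℝ), b, cv)
      simpa using h
    have hiden : f y - f x - gradf x ((a : ℝ), b, cv) =
        (f q1 - f x - a • G1) + (f q2 - f q1 - b • G2) + (f q3 - f q2 - s₁ • G1) +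
        (f q4 - f q3 - s₂ • G2) + (f q5 - f q4 - (-s₁) • G1) + (f y - f q5 - (-s₂) • G2) := by
      rw [hGv, neg_smul, neg_smul]
      abel
    have hupper : ‖f y - f x - gradf x ((a : ℝ), b, cv)‖ ≤ c / 2 * m := by
      rw [hiden]
      have htri := norm_add6 (f q1 - f x - a • G1) (f q2 - f q1 - b • G2)
        (f q3 - f q2 - s₁ • G1) (f q4 - f q3 - s₂ • G2) (f q5 - f q4 - (-s₁) • G1)
        (f y - f q5 - (-s₂) • G2)
      have hbound : ε' * |a| + ε' * |b| + ε' * |s₁| + ε' * |s₂| + ε' * |-s₁| + ε' * |-s₂|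
          ≤ c / 2 * m := by
        rw [abs_neg, abs_neg, abs_of_nonneg hs₁0]
        have h₁ : |a| + |b| + s₁ + |s₂| + s₁ + |s₂| ≤ Cα * m := by
          rw [hCα_def]
          have k1 : s₁ ≤ α * m + m := by linarith [hs₁m]
          have k2 : |s₂| ≤ α * m + m := hs₂abs.trans k1
          linarith [ha, hb]
        have hε'C : ε' * Cα = c / 2 := by
          rw [hε'_def]
          have hCne : Cα ≠ 0 := ne_of_gt hCα
          field_simp
        have h₂ : ε' * (|a| + |b| + s₁ + |s₂| + s₁ + |s₂|) ≤ ε' * (Cα * m) :=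
          mul_le_mul_of_nonneg_left h₁ hε'.le
        have h₃ : ε' * (Cα * m) = c / 2 * m := by
          rw [← hε'C]; ring
        calc ε' * |a| + ε' * |b| + ε' * s₁ + ε' * |s₂| + ε' * s₁ + ε' * |s₂|
            = ε' * (|a| + |b| + s₁ + |s₂| + s₁ + |s₂|) := by ring
          _ ≤ ε' * (Cα * m) := h₂
          _ = c / 2 * m := h₃
      linarith
    have hfyx : f y - f x = 0 := by rw [hyz, hxz, sub_self]
    have hnormGv : ‖gradf x ((a : ℝ), b, cv)‖ ≤ c / 2 * m := by
      rw [hfyx, zero_sub, norm_neg] at hupper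
      exact hupper
    -- lower bound
    have hdev : ‖gradf x - gradf p‖ ≤ c := hgradc x hxball
    have hmax := hc0' a b
    have hmle : m ≤ |a| + |b| := by
      rw [hm_def]
      have h1 : Real.sqrt (a ^ 2 + b ^ 2) ≤ Real.sqrt ((|a| + |b|) ^ 2) :=
        Real.sqrt_le_sqrt (by
          have j1 := mul_nonneg (abs_nonneg a) (abs_nonneg b)
          have j2 := sq_abs a
          have j3 := sq_abs b
          linarith [j1, j2, j3])
      rwa [Real.sqrt_sq (by positivity)] at h1
    have hmaxm : m / 2 ≤ max |a| |b| := by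
      have h1 := le_max_left |a| |b|
      have h2 := le_max_right |a| |b|
      linarith
    have hlow1 : c0 / 2 * m ≤ ‖gradf p ((a : ℝ), b, (0 : ℝ))‖ := by
      have h1 := mul_le_mul_of_nonneg_left hmaxm hc0.le
      linarith [hmax]
    have hdiffn : ‖gradf x ((a : ℝ), b, (0 : ℝ)) - gradf p ((a : ℝ), b, (0 : ℝ))‖ ≤ c * m := by
      calc ‖gradf x ((a : ℝ), b, (0 : ℝ)) - gradf p ((a : ℝ), b, (0 : ℝ))‖
          = ‖(gradf x - gradf p) ((a : ℝ), b, (0 : ℝ))‖ := by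
            rw [ContinuousLinearMap.sub_apply]
        _ ≤ ‖gradf x - gradf p‖ * ‖(((a : ℝ), b, (0 : ℝ)) : Hei)‖ :=
            ContinuousLinearMap.le_opNorm _ _
        _ ≤ c * m := by
            have hn : ‖(((a : ℝ), b, (0 : ℝ)) : Hei)‖ ≤ m :=
              hei_norm_le ha hb (by simpa using hm0)
            exact mul_le_mul hdev hn (norm_nonneg _) hc.le
    have hgx0 : gradf x ((a : ℝ), b, cv) = gradf x ((a : ℝ), b, (0 : ℝ)) := by
      have e1 := clm_horiz (gradf x) hG ((a : ℝ), b, cv)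
      have e2 := clm_horiz (gradf x) hG ((a : ℝ), b, (0 : ℝ))
      rw [e1, e2]
    have hlow : c * m ≤ ‖gradf x ((a : ℝ), b, cv)‖ := by
      rw [hgx0]
      have htr : ‖gradf p ((a : ℝ), b, (0 : ℝ))‖ ≤ ‖gradf x ((a : ℝ), b, (0 : ℝ))‖ +
          ‖gradf x ((a : ℝ), b, (0 : ℝ)) - gradf p ((a : ℝ), b, (0 : ℝ))‖ := by
        have h1 := norm_sub_le (gradf x ((a : ℝ), b, (0 : ℝ)))
          (gradf x ((a : ℝ), b, (0 : ℝ)) - gradf p ((a : ℝ), b, (0 : ℝ)))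
        have h2 : gradf x ((a : ℝ), b, (0 : ℝ)) -
            (gradf x ((a : ℝ), b, (0 : ℝ)) - gradf p ((a : ℝ), b, (0 : ℝ)))
            = gradf p ((a : ℝ), b, (0 : ℝ)) := by abel
        rw [h2] at h1
        exact h1
      rw [hc_def] at hdiffn ⊢
      linarith [hlow1, hdiffn, htr]
    have hm_zero : m = 0 := by
      by_contra hne
      have hmpos : 0 < m := lt_of_le_of_ne hm0 (Ne.symm hne)
      have k1 : c * m ≤ c / 2 * m := le_trans hlow hnormGv
      have k2 : c / 2 * m < c * m := by
        apply mul_lt_mul_of_pos_right _ hmpos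
        linarith
      linarith
    have ha0 : a = 0 := by
      have h1 := ha
      rw [hm_zero] at h1
      exact abs_eq_zero.1 (le_antisymm h1 (abs_nonneg a))
    have hb0 : b = 0 := by
      have h1 := hb
      rw [hm_zero] at h1
      exact abs_eq_zero.1 (le_antisymm h1 (abs_nonneg b))
    have hcv0 : cv = 0 := by
      have h2 := hv1
      rw [hm_zero, mul_zero] at h2
      have h3 : Real.sqrt |cv| = 0 := le_antisymm h2 (Real.sqrt_nonneg _)
      have h4 : |cv| = 0 := (Real.sqrt_eq_zero (abs_nonneg cv)).1 h3
      exact abs_eq_zero.1 h4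
    rw [← hveq, ha0, hb0, hcv0]
    exact hmul_zero x
  · intro hyx
    subst hyx
    refine ⟨⟨hxΩ, hxz⟩, 0, ?_, hmul_zero _⟩
    simp only [coneAtOrigin, Set.mem_setOf_eq, Prod.fst_zero, Prod.snd_zero]
    constructor
    · rw [abs_zero, Real.sqrt_zero]
      positivity
    · have h0 : ((0:ℝ) ^ 2 + (0:ℝ) ^ 2 : ℝ) = 0 := by norm_num
      rw [h0, Real.sqrt_zero, mul_zero]
      positivity
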